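/- For every α ∈ (1, 2) and every ℓ > 0, one has H_α(ℓ) = (α(α−1)/ln 2)·ℓ^(α−2) + 3α·ℓ^(α−1) + 2·ln 2·ℓ^α > 1. -/

import Mathlib

/-- For every α ∈ (1,2) and every ℓ > 0,
`H_α(ℓ) = (α(α−1)/ln 2)·ℓ^(α−2) + 3α·ℓ^(α−1) + 2·ln 2·ℓ^α > 1`. -/
theorem stmt_14 (α : ℝ) (hα : α ∈ Set.Ioo (1 : ℝ) 2) (ℓ : ℝ) (hℓ : 0 < ℓ) :
    1 < α * (α - 1) / Real.log 2 * ℓ ^ (α - 2) + 3 * α * ℓ ^ (α - 1)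
        + 2 * Real.log 2 * ℓ ^ α := by
  obtain ⟨h1, h2⟩ := hα
  have hln : 0 < Real.log 2 := Real.log_pos (by norm_num)
  have hln1 : Real.log 2 < 1 := by
    have h := Real.log_two_lt_d9
    linarith
  have hw1 : 0 < α - 1 := by linarith
  have hw2 : 0 < 2 - α := by linarith
  have hp1 : (0:ℝ) < α / Real.log 2 * ℓ ^ (α - 2) :=
    mul_pos (div_pos (by linarith) hln) (Real.rpow_pos_of_pos hℓ _)
  have hp2 : (0:ℝ) < 3 * α / (2 - α) * ℓ ^ (α - 1) :=
    mul_pos (div_pos (by linarith) hw2) (Real.rpow_pos_of_pos hℓ _)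
  have key := Real.geom_mean_le_arith_mean2_weighted hw1.le hw2.le hp1.le hp2.le (by ring)
  have hrhs : (α - 1) * (α / Real.log 2 * ℓ ^ (α - 2)) + (2 - α) * (3 * α / (2 - α) * ℓ ^ (α - 1))
      = α * (α - 1) / Real.log 2 * ℓ ^ (α - 2) + 3 * α * ℓ ^ (α - 1) := by
    field_simp
  have hc1 : 1 < α / Real.log 2 := by
    rw [lt_div_iff₀ hln]; linarith
  have hc2 : 1 < 3 * α / (2 - α) := by
    rw [lt_div_iff₀ hw2]; nlinarith
  have hl1 : (α / Real.log 2 * ℓ ^ (α - 2)) ^ (α - 1) * (3 * α / (2 - α) * ℓ ^ (α - 1)) ^ (2 - α)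
      = (α / Real.log 2) ^ (α - 1) * (3 * α / (2 - α)) ^ (2 - α)
        * (ℓ ^ ((α - 2) * (α - 1)) * ℓ ^ ((α - 1) * (2 - α))) := by
    rw [Real.mul_rpow (by positivity) (by positivity),
        Real.mul_rpow (by positivity) (by positivity),
        ← Real.rpow_mul hℓ.le, ← Real.rpow_mul hℓ.le]
    ring
  have hl2 : ℓ ^ ((α - 2) * (α - 1)) * ℓ ^ ((α - 1) * (2 - α)) = 1 := by
    rw [← Real.rpow_add hℓ]
    norm_num [show (α - 2) * (α - 1) + (α - 1) * (2 - α) = 0 by ring]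
  have hone : 1 < (α / Real.log 2 * ℓ ^ (α - 2)) ^ (α - 1)
      * (3 * α / (2 - α) * ℓ ^ (α - 1)) ^ (2 - α) := by
    rw [hl1, hl2, mul_one]
    have a1 : 1 < (α / Real.log 2) ^ (α - 1) :=
      (Real.one_lt_rpow_iff_of_pos (by positivity)).mpr (Or.inl ⟨hc1, hw1⟩)
    have a2 : 1 < (3 * α / (2 - α)) ^ (2 - α) :=
      (Real.one_lt_rpow_iff_of_pos (by positivity)).mpr (Or.inl ⟨hc2, hw2⟩)
    nlinarith
  have hpos3 : 0 < 2 * Real.log 2 * ℓ ^ α := by positivity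
  rw [hrhs] at key
  linarith
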